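/- The Magnus expansion E : A → ℤ⟨⟨X_1,...,X_n⟩⟩, sending each free generator α_i of the free group A of rank n to 1 + X_i, is an injective group homomorphism into the group of units of ℤ⟨⟨X_1,...,X_n⟩⟩. -/

import Mathlib

/-- The ring `ℤ⟨⟨X_i : i ∈ σ⟩⟩` of formal power series in non-commuting variables,
realized as coefficient functions on words (monomials) in the alphabet `σ`. -/
def NCSeries (σ : Type*) : Type _ := List σ → ℤ

instance {σ : Type*} : AddCommGroup (NCSeries σ) :=
  inferInstanceAs (AddCommGroup (List σ → ℤ))

instance {σ : Type*} : One (NCSeries σ) :=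
  ⟨fun w => match w with | [] => 1 | _ => 0⟩

/-- Multiplication of non-commutative power series: convolution over all
splittings of a word. -/
instance {σ : Type*} : Mul (NCSeries σ) :=
  ⟨fun f g => fun w => ∑ i ∈ Finset.range (w.length + 1), f (w.take i) * g (w.drop i)⟩

/-- The variable `X_j`, as a power series. -/
def Xvar {σ : Type*} [DecidableEq σ] (j : σ) : NCSeries σ :=
  fun w => if w = [j] then 1 else 0

/-- The Magnus expansion of a single letter: `α_i ↦ 1 + X_i` and
`α_i⁻¹ ↦ 1 - X_i + X_i² - ⋯`. -/
def letterE {σ : Type*} [DecidableEq σ] (l : σ × Bool) : NCSeries σ := fun w =>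
  if l.2 then (if w = [] ∨ w = [l.1] then (1 : ℤ) else 0)
  else (if ∀ a ∈ w, a = l.1 then ((-1) ^ w.length : ℤ) else 0)

/-- The Magnus expansion `E : FreeGroup σ → ℤ⟨⟨X_i : i ∈ σ⟩⟩`, computed as the
product of the Magnus expansions of the letters of the reduced word. -/
def magnus {σ : Type*} [DecidableEq σ] (x : FreeGroup σ) : NCSeries σ :=
  (FreeGroup.toWord x).foldr (fun l acc => letterE l * acc) 1

/-- The `q`-th term of the lower central series, indexed as in Milnor's paper:
`lcs G 1 = G`, `lcs G (q+1) = [G, lcs G q]`. -/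
def lcs (G : Type*) [Group G] (q : ℕ) : Subgroup G := Subgroup.lowerCentralSeries (⊤ : Subgroup G) (q - 1)

namespace NC

variable {σ : Type*}

lemma mul_apply (f g : NCSeries σ) (w : List σ) :
    (f * g) w = ∑ i ∈ Finset.range (w.length + 1), f (w.take i) * g (w.drop i) := rfl

open Classical in
lemma one_apply (w : List σ) : (1 : NCSeries σ) w = if w = [] then 1 else 0 := by
  cases w with
  | nil => rw [if_pos rfl]; rfl
  | cons a t => rw [if_neg (by simp)]; rfl

lemma add_apply (f g : NCSeries σ) (w : List σ) : (f + g) w = f w + g w := rfl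

lemma one_mul (f : NCSeries σ) : 1 * f = f := by
  funext w
  rw [mul_apply]
  rw [Finset.sum_eq_single_of_mem 0 (by simp)]
  · simp [one_apply]
  · intro j hj hj0
    rw [one_apply, if_neg, zero_mul]
    rw [List.take_eq_nil_iff]
    rintro (h | h)
    · exact hj0 h
    · subst h; simp at hj; omega

lemma mul_one (f : NCSeries σ) : f * 1 = f := by
  funext w
  rw [mul_apply]
  rw [Finset.sum_eq_single_of_mem w.length (by simp)]
  · simp [one_apply]
  · intro j hj hj0
    rw [one_apply, if_neg, mul_zero]
    rw [List.drop_eq_nil_iff]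
    simp at hj; omega

lemma mul_assoc (f g h : NCSeries σ) : f * g * h = f * (g * h) := by
  funext w
  set n := w.length with hn
  rw [mul_apply, mul_apply]
  have L1 : ∀ j ∈ Finset.range (n + 1),
      (f * g) (w.take j) * h (w.drop j) =
      ∑ i ∈ Finset.range (n + 1), (if i ≤ j then
        f (w.take i) * (g ((w.drop i).take (j - i)) * h (w.drop j)) else 0) := by
    intro j hj
    simp only [Finset.mem_range] at hj
    rw [mul_apply, Finset.sum_mul]
    have hlen : (w.take j).length = j := by
      rw [List.length_take]; omega
    rw [hlen]
    have hset : Finset.range (j + 1) = Finset.filter (fun i => i ≤ j) (Finset.range (n + 1)) := by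
      ext i; simp only [Finset.mem_filter, Finset.mem_range]; omega
    rw [hset, Finset.sum_filter]
    apply Finset.sum_congr rfl
    intro i hi
    by_cases hij : i ≤ j
    case neg => simp [hij]
    simp only [if_pos hij]
    rw [List.take_take, min_eq_left hij, List.drop_take, _root_.mul_assoc]
  rw [Finset.sum_congr rfl L1, Finset.sum_comm]
  apply Finset.sum_congr rfl
  intro i hi
  simp only [Finset.mem_range] at hi
  rw [mul_apply, Finset.mul_sum]
  have hdlen : (w.drop i).length = n - i := by rw [List.length_drop]
  rw [hdlen]
  have hset : Finset.Ico i (n + 1) = Finset.filter (fun j => i ≤ j) (Finset.range (n + 1)) := by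
    ext j; simp only [Finset.mem_filter, Finset.mem_range, Finset.mem_Ico]; omega
  rw [show (∑ x ∈ Finset.range (n + 1),
      if i ≤ x then f (w.take i) * (g ((w.drop i).take (x - i)) * h (w.drop x)) else 0)
      = ∑ x ∈ Finset.Ico i (n + 1),
      f (w.take i) * (g ((w.drop i).take (x - i)) * h (w.drop x)) by
    rw [hset, Finset.sum_filter]]
  rw [Finset.sum_Ico_eq_sum_range]
  have : n + 1 - i = n - i + 1 := by omega
  rw [this]
  apply Finset.sum_congr rfl
  intro k hk
  have h1 : i + k - i = k := by omega
  rw [h1, List.drop_drop]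

instance : Monoid (NCSeries σ) where
  one_mul := one_mul
  mul_one := mul_one
  mul_assoc := mul_assoc

lemma add_mul (f g h : NCSeries σ) : (f + g) * h = f * h + g * h := by
  funext w
  simp [mul_apply, add_apply, _root_.add_mul, Finset.sum_add_distrib]

lemma mul_add (f g h : NCSeries σ) : f * (g + h) = f * g + f * h := by
  funext w
  simp [mul_apply, add_apply, _root_.mul_add, Finset.sum_add_distrib]

variable [DecidableEq σ]

lemma letterE_nil (l : σ × Bool) : letterE l [] = 1 := by
  rcases l with ⟨a, b⟩; cases b <;> simp [letterE]

lemma letterE_single (l : σ × Bool) : letterE l [l.1] = if l.2 then 1 else -1 := by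
  rcases l with ⟨a, b⟩; cases b <;> simp [letterE]

lemma letterE_true (i : σ) : letterE (i, true) = 1 + Xvar i := by
  funext w
  rcases w with _ | ⟨a, t⟩
  · simp [letterE, one_apply, Xvar, add_apply]
  · simp only [letterE, add_apply, one_apply, Xvar]
    simp only [if_true]
    by_cases h : a :: t = [i] <;> simp [h]

lemma Xvar_mul_apply (i : σ) (f : NCSeries σ) (w : List σ) :
    (Xvar i * f) w = match w with
      | [] => 0
      | a :: t => if a = i then f t else 0 := by
  rcases w with _ | ⟨a, t⟩
  · simp [mul_apply, Xvar]
  · rw [mul_apply]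
    rw [Finset.sum_eq_single_of_mem 1 (by simp)]
    · simp only [List.take_one, List.drop_one]
      simp only [Xvar]
      by_cases h : a = i <;> simp [h]
    · intro j hj hj1
      simp only [Finset.mem_range, List.length_cons] at hj
      rw [Xvar]
      rw [if_neg, zero_mul]
      intro hcon
      have := congrArg List.length hcon
      rw [List.length_take] at this
      simp at this
      omega

lemma mul_Xvar_concat (i : σ) (f : NCSeries σ) (q : List σ) (a : σ) :
    (f * Xvar i) (q ++ [a]) = if a = i then f q else 0 := by
  rw [mul_apply]
  rw [Finset.sum_eq_single_of_mem q.length (by simp)]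
  · rw [List.take_left, List.drop_left]
    simp only [Xvar]
    by_cases h : a = i <;> simp [h]
  · intro j hj hjq
    simp only [Finset.mem_range, List.length_append, List.length_singleton] at hj
    rw [Xvar, if_neg, mul_zero]
    intro hcon
    have := congrArg List.length hcon
    rw [List.length_drop] at this
    simp at this
    omega

lemma mul_Xvar_nil (i : σ) (f : NCSeries σ) : (f * Xvar i) [] = 0 := by
  simp [mul_apply, Xvar]

lemma neg_cons (i : σ) (a : σ) (t : List σ) :
    letterE (i, false) (a :: t) = if a = i then -letterE (i, false) t else 0 := by
  simp only [letterE, Bool.false_eq_true, if_false, List.length_cons]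
  by_cases h : a = i
  · subst h
    by_cases ht : ∀ x ∈ t, x = a
    · have hall : ∀ x ∈ a :: t, x = a := by
        intro x hx
        rcases List.mem_cons.1 hx with hx | hx
        · exact hx
        · exact ht x hx
      rw [if_pos hall, if_pos ht]; simp [pow_succ]
    · have hnall : ¬ ∀ x ∈ a :: t, x = a := fun hc => ht fun x hx => hc x (List.mem_cons_of_mem _ hx)
      rw [if_neg hnall, if_neg ht]; simp
  · have hnall : ¬ ∀ x ∈ a :: t, x = i := fun hc => h (hc a List.mem_cons_self)
    rw [if_neg hnall, if_neg h]

lemma pos_mul_neg (i : σ) : letterE (i, true) * letterE (i, false) = 1 := by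
  rw [letterE_true, add_mul, NC.one_mul]
  funext w
  rw [add_apply, Xvar_mul_apply]
  rcases w with _ | ⟨a, t⟩
  · simp [letterE_nil, one_apply]
  · rw [neg_cons, one_apply]
    by_cases h : a = i <;> simp [h]

lemma neg_concat (i : σ) (q : List σ) (a : σ) :
    letterE (i, false) (q ++ [a]) = if a = i then -letterE (i, false) q else 0 := by
  simp only [letterE, Bool.false_eq_true, if_false, List.length_append, List.length_cons,
    List.length_nil]
  by_cases h : a = i
  · subst h
    by_cases hq : ∀ x ∈ q, x = a
    · have hall : ∀ x ∈ q ++ [a], x = a := by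
        intro x hx
        rcases List.mem_append.1 hx with hx | hx
        · exact hq x hx
        · simpa using hx
      rw [if_pos hall, if_pos hq]; simp [pow_succ]
    · have hnall : ¬ ∀ x ∈ q ++ [a], x = a :=
        fun hc => hq fun x hx => hc x (List.mem_append_left _ hx)
      rw [if_neg hnall, if_neg hq]; simp
  · have hnall : ¬ ∀ x ∈ q ++ [a], x = i := fun hc => h (hc a (by simp))
    rw [if_neg hnall, if_neg h]

lemma neg_mul_pos (i : σ) : letterE (i, false) * letterE (i, true) = 1 := by
  rw [letterE_true, mul_add, NC.mul_one]
  funext w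
  rw [add_apply]
  rcases List.eq_nil_or_concat' w with rfl | ⟨q, a, rfl⟩
  · simp [mul_Xvar_nil, letterE_nil, one_apply]
  · rw [mul_Xvar_concat, neg_concat, one_apply]
    by_cases h : a = i <;> simp [h]

/-- The Magnus unit of a generator. -/
def U (i : σ) : (NCSeries σ)ˣ :=
  ⟨letterE (i, true), letterE (i, false), pos_mul_neg i, neg_mul_pos i⟩

/-- The Magnus expansion as a group homomorphism into units. -/
def phi : FreeGroup σ →* (NCSeries σ)ˣ := FreeGroup.lift U

lemma magnus_eq (x : FreeGroup σ) : magnus x = ((phi x : (NCSeries σ)ˣ) : NCSeries σ) := by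
  conv_rhs => rw [← FreeGroup.mk_toWord (x := x)]
  rw [magnus, phi, FreeGroup.lift_mk]
  rw [← Units.coeHom_apply, map_list_prod]
  rw [List.map_map, List.prod_eq_foldr, List.foldr_map]
  congr 1
  funext l acc
  rcases l with ⟨j, b⟩
  cases b <;> rfl

/-! ### The combinatorial injectivity argument -/

/-- Product of letter expansions over a word. -/
def prodE (L : List (σ × Bool)) : NCSeries σ := (L.map letterE).prod

lemma magnus_eq_prodE (x : FreeGroup σ) : magnus x = prodE (FreeGroup.toWord x) := by
  rw [magnus, prodE, List.prod_eq_foldr, List.foldr_map]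

lemma prodE_append (L₁ L₂ : List (σ × Bool)) :
    prodE (L₁ ++ L₂) = prodE L₁ * prodE L₂ := by
  rw [prodE, prodE, prodE, List.map_append, List.prod_append]

/-- Coefficients of a power of a single letter expansion: vanishing off `a^*`. -/
lemma block_ne (a : σ) (b : Bool) (m : ℕ) (w : List σ) (hw : ∃ x ∈ w, x ≠ a) :
    prodE (List.replicate m (a, b)) w = 0 := by
  induction m generalizing w with
  | zero =>
    obtain ⟨x, hx, _⟩ := hw
    rcases w with _ | ⟨c, t⟩
    · simp at hx
    · rfl
  | succ m ih =>
    rw [List.replicate_succ, prodE, List.map_cons, List.prod_cons, ← prodE, mul_apply]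
    apply Finset.sum_eq_zero
    intro j hj
    obtain ⟨x, hx, hxa⟩ := hw
    rw [← List.take_append_drop j w, List.mem_append] at hx
    rcases hx with hx | hx
    · have hz : letterE (a, b) (w.take j) = 0 := by
        cases b
        · show (if (∀ c ∈ w.take j, c = a) then ((-1 : ℤ) ^ (w.take j).length) else 0) = 0
          exact if_neg fun hcon => hxa (hcon x hx)
        · show (if (w.take j = [] ∨ w.take j = [a]) then (1 : ℤ) else 0) = 0
          apply if_neg
          rintro (h | h)
          · rw [h] at hx; simp at hx
          · rw [h] at hx; simp at hx; exact hxa hx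
      rw [hz, zero_mul]
    · rw [ih _ ⟨x, hx, hxa⟩, mul_zero]

lemma block_nil (a : σ) (b : Bool) (m : ℕ) :
    prodE (List.replicate m (a, b)) [] = 1 := by
  induction m with
  | zero => rfl
  | succ m ih =>
    rw [List.replicate_succ, prodE, List.map_cons, List.prod_cons, ← prodE, mul_apply]
    simp [letterE_nil, ih]

lemma block_single (a : σ) (b : Bool) (m : ℕ) :
    prodE (List.replicate m (a, b)) [a] = if b then (m : ℤ) else -(m : ℤ) := by
  induction m with
  | zero => cases b <;> rfl
  | succ m ih =>
    rw [List.replicate_succ, prodE, List.map_cons, List.prod_cons, ← prodE, mul_apply]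
    show ∑ j ∈ Finset.range 2,
        letterE (a, b) ([a].take j) * prodE (List.replicate m (a, b)) ([a].drop j) = _
    rw [Finset.sum_range_succ, Finset.sum_range_succ, Finset.sum_range_zero, zero_add]
    have e0 : ([a] : List σ).take 0 = [] := rfl
    have e0' : ([a] : List σ).drop 0 = [a] := rfl
    have e1 : ([a] : List σ).take 1 = [a] := rfl
    have e2 : ([a] : List σ).drop 1 = [] := rfl
    have h1 : letterE (a, b) [a] = if b then 1 else -1 := letterE_single (a, b)
    rw [e0, e0', e1, e2, letterE_nil, ih, h1, block_nil]
    cases b <;> simp <;> ring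

/-- Flatten a run list into a word. -/
def flattenR (R : List (σ × Bool × ℕ)) : List (σ × Bool) :=
  R.flatMap fun r => List.replicate (r.2.2 + 1) (r.1, r.2.1)

lemma smooth_two_le {w : List σ} (hw : w.Chain' (· ≠ ·)) (h2 : 2 ≤ w.length) (a : σ) :
    ∃ x ∈ w, x ≠ a := by
  rcases w with _ | ⟨x, _ | ⟨y, t⟩⟩
  · simp at h2
  · simp at h2
  · have hxy : x ≠ y := (List.isChain_cons_cons.1 hw).1
    by_cases hx : x = a
    · refine ⟨y, by simp, fun h => hxy ?_⟩
      rw [hx, h]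
    · exact ⟨x, by simp, hx⟩

/-- The key lemma: coefficients of the product over a run list. -/
lemma run_key (R : List (σ × Bool × ℕ)) (hR : R.Chain' (fun p q => p.1 ≠ q.1)) :
    (∀ w : List σ, w.Chain' (· ≠ ·) → R.length < w.length → prodE (flattenR R) w = 0) ∧
    prodE (flattenR R) (R.map (·.1)) ≠ 0 := by
  induction R with
  | nil =>
    constructor
    · intro w _ hw
      rcases w with _ | ⟨c, t⟩
      · simp at hw
      · rfl
    · simp only [flattenR, List.flatMap_nil, List.map_nil, prodE, List.prod_nil]
      rw [one_apply]
      simp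
  | cons r T ih =>
    obtain ⟨a, b, m⟩ := r
    have hchain : T.Chain' (fun p q => p.1 ≠ q.1) := hR.tail
    obtain ⟨ih1, ih2⟩ := ih hchain
    have hflat : flattenR ((a, b, m) :: T) = List.replicate (m + 1) (a, b) ++ flattenR T := by
      simp [flattenR]
    have key : ∀ w : List σ, w.Chain' (· ≠ ·) → 1 ≤ w.length →
        prodE (flattenR ((a, b, m) :: T)) w =
          prodE (flattenR T) w +
          prodE (List.replicate (m + 1) (a, b)) (w.take 1) * prodE (flattenR T) (w.drop 1) := by
      intro w hsm h1
      rw [hflat, prodE_append, mul_apply, Finset.range_eq_Ico]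
      rw [Finset.sum_eq_sum_Ico_succ_bot (by omega : 0 < w.length + 1)]
      rw [Finset.sum_eq_sum_Ico_succ_bot (by omega : 1 < w.length + 1)]
      have hrest : ∑ j ∈ Finset.Ico 2 (w.length + 1),
          prodE (List.replicate (m + 1) (a, b)) (w.take j) * prodE (flattenR T) (w.drop j) = 0 := by
        apply Finset.sum_eq_zero
        intro j hj
        simp only [Finset.mem_Ico] at hj
        have hlen : (w.take j).length = j := by rw [List.length_take]; omega
        have hsm' : (w.take j).Chain' (· ≠ ·) := hsm.prefix (List.take_prefix j w)
        rw [block_ne a b (m + 1) _ (smooth_two_le hsm' (by omega) a), zero_mul]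
      rw [hrest, List.take_zero, List.drop_zero, block_nil]
      ring
    constructor
    · intro w hsm hlen
      simp only [List.length_cons] at hlen
      rw [key w hsm (by omega)]
      rw [ih1 w hsm (by omega)]
      rcases w with _ | ⟨c, t⟩
      · simp at hlen
      · have e1 : (c :: t).take 1 = [c] := rfl
        have e2 : (c :: t).drop 1 = t := rfl
        rw [e1, e2]
        by_cases hc : c = a
        · rw [ih1 t hsm.tail (by simpa using hlen), mul_zero, add_zero]
        · rw [block_ne a b (m + 1) [c] ⟨c, by simp, hc⟩, zero_mul, add_zero]
    · have hmap : ((a, b, m) :: T).map (·.1) = a :: T.map (·.1) := rfl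
      rw [hmap]
      have hsm : (a :: T.map (·.1)).Chain' (· ≠ ·) := by
        have := (List.isChain_map (fun x : σ × Bool × ℕ => x.1)).2 hR
        rw [hmap] at this
        exact this
      rw [key _ hsm (by simp)]
      rw [ih1 _ hsm (by simp)]
      have e1 : (a :: T.map (·.1)).take 1 = [a] := rfl
      have e2 : (a :: T.map (·.1)).drop 1 = T.map (·.1) := rfl
      rw [e1, e2, zero_add, block_single]
      apply mul_ne_zero
      · cases b <;> simp <;> omega
      · exact ih2

/-- Decomposition of a reduced word into runs. -/
lemma run_decomp (L : List (σ × Bool))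
    (hL : L.Chain' (fun p q => ¬(p.1 = q.1 ∧ q.2 = !p.2))) :
    ∃ R : List (σ × Bool × ℕ), R.Chain' (fun p q => p.1 ≠ q.1) ∧ flattenR R = L := by
  induction L with
  | nil => exact ⟨[], List.isChain_nil, rfl⟩
  | cons l L' ih =>
    obtain ⟨R', hR', hflat⟩ := ih hL.tail
    rcases R' with _ | ⟨⟨a, b, m⟩, T⟩
    · refine ⟨[(l.1, l.2, 0)], List.isChain_singleton _, ?_⟩
      simp only [flattenR, List.flatMap_nil] at hflat
      simp [flattenR, ← hflat]
    · have hhead : L' = (a, b) :: (List.replicate m (a, b) ++ flattenR T) := by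
        rw [← hflat]
        simp [flattenR, List.replicate_succ]
      by_cases hla : l.1 = a
      · have hb : l.2 = b := by
          rcases List.isChain_cons_cons.1 (hhead ▸ hL) with ⟨h1, _⟩
          rcases l with ⟨x, c⟩
          simp only at hla h1 ⊢
          by_contra hc
          exact h1 ⟨hla, by cases c <;> cases b <;> simp_all⟩
        refine ⟨(a, b, m + 1) :: T, ?_, ?_⟩
        · rw [List.Chain', List.isChain_cons] at hR' ⊢
          exact ⟨fun q hq => hR'.1 q hq, hR'.2⟩
        · simp only [flattenR, List.flatMap_cons, List.replicate_succ] at hflat ⊢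
          rw [← hflat]
          have : l = (a, b) := by rcases l with ⟨x, c⟩; simp_all
          simp [this, List.replicate_succ]
      · refine ⟨(l.1, l.2, 0) :: (a, b, m) :: T, ?_, ?_⟩
        · rw [List.Chain', List.isChain_cons_cons]
          exact ⟨hla, hR'⟩
        · simp only [flattenR, List.flatMap_cons] at hflat ⊢
          rw [← hflat]
          simp [flattenR]

lemma chain'_of_no_pair (L : List (σ × Bool))
    (h : ∀ (L₂ : List (σ × Bool)) (x : σ) (b : Bool) (L₃ : List (σ × Bool)),
      L ≠ L₂ ++ (x, b) :: (x, !b) :: L₃) :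
    L.Chain' (fun p q => ¬(p.1 = q.1 ∧ q.2 = !p.2)) := by
  induction L with
  | nil => exact List.isChain_nil
  | cons p L' ih =>
    rcases L' with _ | ⟨q, t⟩
    · exact List.isChain_singleton _
    · rw [List.Chain', List.isChain_cons_cons]
      constructor
      · rintro ⟨h1, h2⟩
        exact h [] p.1 p.2 t (by
          rcases p with ⟨x, c⟩; rcases q with ⟨y, d⟩
          simp only at h1 h2
          simp [← h1, h2])
      · exact ih fun L₂ x b L₃ hcon => h (p :: L₂) x b L₃ (by rw [hcon]; rfl)

lemma toWord_chain' (x : FreeGroup σ) :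
    (FreeGroup.toWord x).Chain' (fun p q => ¬(p.1 = q.1 ∧ q.2 = !p.2)) := by
  apply chain'_of_no_pair
  intro L₂ y b L₃ hcon
  exact FreeGroup.reduce.not (L₁ := FreeGroup.toWord x)
    (by rw [FreeGroup.reduce_toWord]; exact hcon)

lemma magnus_ne_one (x : FreeGroup σ) (hx : x ≠ 1) : magnus x ≠ 1 := by
  obtain ⟨R, hR, hflat⟩ := run_decomp (FreeGroup.toWord x) (toWord_chain' x)
  have hne : FreeGroup.toWord x ≠ [] := by
    intro hcon
    exact hx (by rw [← FreeGroup.mk_toWord (x := x), hcon]; rfl)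
  have hRne : R ≠ [] := by
    rintro rfl
    exact hne hflat.symm
  intro hcon
  have h2 := (run_key R hR).2
  rw [hflat, ← magnus_eq_prodE, hcon] at h2
  apply h2
  rw [one_apply, if_neg]
  · rintro hmap
    exact hRne (List.map_eq_nil_iff.1 hmap)

end NC

theorem stmt3 (n : ℕ) :
    magnus (1 : FreeGroup (Fin n)) = 1 ∧
    (∀ x y : FreeGroup (Fin n), magnus (x * y) = magnus x * magnus y) ∧
    Function.Injective (magnus : FreeGroup (Fin n) → NCSeries (Fin n)) ∧
    (∀ x : FreeGroup (Fin n), ∃ u : NCSeries (Fin n),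
      magnus x * u = 1 ∧ u * magnus x = 1) := by
  refine ⟨?_, ?_, ?_, ?_⟩
  · rw [NC.magnus_eq, map_one, Units.val_one]
  · intro x y
    rw [NC.magnus_eq, NC.magnus_eq, NC.magnus_eq, map_mul, Units.val_mul]
  · intro x y hxy
    by_contra hne
    have h1 : x * y⁻¹ ≠ 1 := by
      intro hcon
      exact hne (mul_inv_eq_one.1 hcon)
    apply NC.magnus_ne_one _ h1
    rw [NC.magnus_eq, map_mul, map_inv, Units.val_mul]
    rw [NC.magnus_eq, NC.magnus_eq] at hxy
    have : NC.phi x = NC.phi y := Units.ext hxy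
    rw [this, ← Units.val_mul, mul_inv_cancel, Units.val_one]
  · intro x
    exact ⟨((NC.phi x)⁻¹ : (NCSeries (Fin n))ˣ), by
      rw [NC.magnus_eq, ← Units.val_mul, mul_inv_cancel, Units.val_one], by
      rw [NC.magnus_eq, ← Units.val_mul, inv_mul_cancel, Units.val_one]⟩
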